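/- For η₁ > 0 and γ > 0, the function q(x,t) := -9·γ·η₁²·e^{√3·η₁(x + 3η₁t)} / (2·(1 + γ·e^{√3·η₁(x + 3η₁t)})²) satisfies the modified bad Boussinesq equation q_tt + 12·(q²)_xx - 3·q_xxxx = 0. -/

import Mathlib

noncomputable def dX (f : ℝ → ℝ → ℝ) : ℝ → ℝ → ℝ := fun x t => deriv (fun x' => f x' t) x
noncomputable def dT (f : ℝ → ℝ → ℝ) : ℝ → ℝ → ℝ := fun x t => deriv (fun t' => f x t') t

noncomputable def vv (η₁ γ x t : ℝ) : ℝ :=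
  (1 + γ * Real.exp (Real.sqrt 3 * η₁ * (x + 3 * η₁ * t)))⁻¹

lemma upos (η₁ γ : ℝ) (hγ : 0 < γ) (x t : ℝ) :
    (0:ℝ) < 1 + γ * Real.exp (Real.sqrt 3 * η₁ * (x + 3 * η₁ * t)) := by positivity

lemma hda_congr {f : ℝ → ℝ} {a b x : ℝ} (h : HasDerivAt f a x) (e : a = b) :
    HasDerivAt f b x := e ▸ h

lemma hvx (η₁ γ : ℝ) (hγ : 0 < γ) (x t : ℝ) :
    HasDerivAt (fun x' => vv η₁ γ x' t)
      (Real.sqrt 3 * η₁ * ((vv η₁ γ x t) ^ 2 - vv η₁ γ x t)) x := by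
  have hlin : HasDerivAt (fun x' : ℝ => Real.sqrt 3 * η₁ * (x' + 3 * η₁ * t))
      (Real.sqrt 3 * η₁) x := by
    simpa using (((hasDerivAt_id x).add_const (3*η₁*t)).const_mul (Real.sqrt 3 * η₁))
  have hu : HasDerivAt (fun x' => 1 + γ * Real.exp (Real.sqrt 3 * η₁ * (x' + 3 * η₁ * t)))
      (γ * (Real.exp (Real.sqrt 3 * η₁ * (x + 3 * η₁ * t)) * (Real.sqrt 3 * η₁))) x :=
    (hlin.exp.const_mul γ).const_add 1
  have hne := (upos η₁ γ hγ x t).ne'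
  have hv := hu.inv hne
  have heq : -(γ * (Real.exp (Real.sqrt 3 * η₁ * (x + 3 * η₁ * t)) * (Real.sqrt 3 * η₁))) /
      (1 + γ * Real.exp (Real.sqrt 3 * η₁ * (x + 3 * η₁ * t))) ^ 2
      = Real.sqrt 3 * η₁ * ((vv η₁ γ x t) ^ 2 - vv η₁ γ x t) := by
    unfold vv; field_simp; ring
  exact heq ▸ hv

lemma hvt (η₁ γ : ℝ) (hγ : 0 < γ) (x t : ℝ) :
    HasDerivAt (fun t' => vv η₁ γ x t')
      (3 * η₁ * (Real.sqrt 3 * η₁) * ((vv η₁ γ x t) ^ 2 - vv η₁ γ x t)) t := by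
  have hlin : HasDerivAt (fun t' : ℝ => Real.sqrt 3 * η₁ * (x + 3 * η₁ * t'))
      (Real.sqrt 3 * η₁ * (3 * η₁)) t := by
    simpa using ((((hasDerivAt_id t).const_mul (3*η₁)).const_add x).const_mul (Real.sqrt 3 * η₁))
  have hu : HasDerivAt (fun t' => 1 + γ * Real.exp (Real.sqrt 3 * η₁ * (x + 3 * η₁ * t')))
      (γ * (Real.exp (Real.sqrt 3 * η₁ * (x + 3 * η₁ * t)) * (Real.sqrt 3 * η₁ * (3 * η₁)))) t :=
    (hlin.exp.const_mul γ).const_add 1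
  have hne := (upos η₁ γ hγ x t).ne'
  have hv := hu.inv hne
  have heq : -(γ * (Real.exp (Real.sqrt 3 * η₁ * (x + 3 * η₁ * t)) * (Real.sqrt 3 * η₁ * (3 * η₁)))) /
      (1 + γ * Real.exp (Real.sqrt 3 * η₁ * (x + 3 * η₁ * t))) ^ 2
      = 3 * η₁ * (Real.sqrt 3 * η₁) * ((vv η₁ γ x t) ^ 2 - vv η₁ γ x t) := by
    unfold vv; field_simp; ring
  exact heq ▸ hv

lemma derivX (η₁ γ : ℝ) (hγ : 0 < γ) (f : ℝ → ℝ → ℝ) (P P' Q : ℝ → ℝ)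
    (hP : ∀ y, HasDerivAt P (P' y) y)
    (hf : ∀ x t, f x t = P (vv η₁ γ x t))
    (hQ : ∀ y, P' y * (Real.sqrt 3 * η₁ * (y ^ 2 - y)) = Q y)
    (x t : ℝ) : dX f x t = Q (vv η₁ γ x t) := by
  have h := (hP (vv η₁ γ x t)).comp x (hvx η₁ γ hγ x t)
  have hfun : (fun x' => f x' t) = fun x' => P (vv η₁ γ x' t) := funext fun x' => hf x' t
  have hd : dX f x t
      = P' (vv η₁ γ x t) * (Real.sqrt 3 * η₁ * ((vv η₁ γ x t) ^ 2 - vv η₁ γ x t)) := by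
    simp only [dX, hfun]
    exact h.deriv
  rw [hd, hQ]

lemma derivT (η₁ γ : ℝ) (hγ : 0 < γ) (f : ℝ → ℝ → ℝ) (P P' Q : ℝ → ℝ)
    (hP : ∀ y, HasDerivAt P (P' y) y)
    (hf : ∀ x t, f x t = P (vv η₁ γ x t))
    (hQ : ∀ y, P' y * (3 * η₁ * (Real.sqrt 3 * η₁) * (y ^ 2 - y)) = Q y)
    (x t : ℝ) : dT f x t = Q (vv η₁ γ x t) := by
  have h := (hP (vv η₁ γ x t)).comp t (hvt η₁ γ hγ x t)
  have hfun : (fun t' => f x t') = fun t' => P (vv η₁ γ x t') := funext fun t' => hf x t'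
  have hd : dT f x t
      = P' (vv η₁ γ x t) * (3 * η₁ * (Real.sqrt 3 * η₁) * ((vv η₁ γ x t) ^ 2 - vv η₁ γ x t)) := by
    simp only [dT, hfun]
    exact h.deriv
  rw [hd, hQ]

theorem stmt_12 (η₁ γ : ℝ) (hη : 0 < η₁) (hγ : 0 < γ)
    (q : ℝ → ℝ → ℝ)
    (hqdef : ∀ x t : ℝ, q x t =
      -9 * γ * η₁ ^ 2 * Real.exp (Real.sqrt 3 * η₁ * (x + 3 * η₁ * t)) /
        (2 * (1 + γ * Real.exp (Real.sqrt 3 * η₁ * (x + 3 * η₁ * t))) ^ 2)) :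
    ∀ x t : ℝ,
      dT (dT q) x t + 12 * dX (dX (fun x' t' => (q x' t') ^ 2)) x t
        - 3 * dX (dX (dX (dX q))) x t = 0 := by
  -- base formula
  have hq0 : ∀ x t, q x t = 9*η₁^2/2 * ((vv η₁ γ x t)^2 - vv η₁ γ x t) := by
    intro x t
    rw [hqdef]
    unfold vv
    have h := (upos η₁ γ hγ x t).ne'
    field_simp
    ring
  -- polynomial derivative facts
  have hP0 : ∀ y : ℝ, HasDerivAt (fun y => 9*η₁^2/2 * (y^2 - y)) (9*η₁^2/2 * (2*y - 1)) y := by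
    intro y
    exact hda_congr (((hasDerivAt_pow 2 y).sub (hasDerivAt_id y)).const_mul (9*η₁^2/2))
      (by push_cast; ring)
  have hP1 : ∀ y : ℝ, HasDerivAt
      (fun y => Real.sqrt 3 * η₁ * (9*η₁^2/2) * (2*y^3 - 3*y^2 + y))
      (Real.sqrt 3 * η₁ * (9*η₁^2/2) * (6*y^2 - 6*y + 1)) y := by
    intro y
    exact hda_congr (((((hasDerivAt_pow 3 y).const_mul 2).sub
      ((hasDerivAt_pow 2 y).const_mul 3)).add (hasDerivAt_id y)).const_mul
      (Real.sqrt 3 * η₁ * (9*η₁^2/2))) (by push_cast; ring)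
  have hP2 : ∀ y : ℝ, HasDerivAt
      (fun y => (Real.sqrt 3 * η₁)^2 * (9*η₁^2/2) * (6*y^4 - 12*y^3 + 7*y^2 - y))
      ((Real.sqrt 3 * η₁)^2 * (9*η₁^2/2) * (24*y^3 - 36*y^2 + 14*y - 1)) y := by
    intro y
    exact hda_congr ((((((hasDerivAt_pow 4 y).const_mul 6).sub
      ((hasDerivAt_pow 3 y).const_mul 12)).add ((hasDerivAt_pow 2 y).const_mul 7)).sub
      (hasDerivAt_id y)).const_mul ((Real.sqrt 3 * η₁)^2 * (9*η₁^2/2))) (by push_cast; ring)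
  have hP3 : ∀ y : ℝ, HasDerivAt
      (fun y => (Real.sqrt 3 * η₁)^3 * (9*η₁^2/2) * (24*y^5 - 60*y^4 + 50*y^3 - 15*y^2 + y))
      ((Real.sqrt 3 * η₁)^3 * (9*η₁^2/2) * (120*y^4 - 240*y^3 + 150*y^2 - 30*y + 1)) y := by
    intro y
    exact hda_congr (((((((hasDerivAt_pow 5 y).const_mul 24).sub
      ((hasDerivAt_pow 4 y).const_mul 60)).add ((hasDerivAt_pow 3 y).const_mul 50)).sub
      ((hasDerivAt_pow 2 y).const_mul 15)).add (hasDerivAt_id y)).const_mul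
      ((Real.sqrt 3 * η₁)^3 * (9*η₁^2/2))) (by push_cast; ring)
  have hR1 : ∀ y : ℝ, HasDerivAt
      (fun y => 3 * η₁ * (Real.sqrt 3 * η₁) * (9*η₁^2/2) * (2*y^3 - 3*y^2 + y))
      (3 * η₁ * (Real.sqrt 3 * η₁) * (9*η₁^2/2) * (6*y^2 - 6*y + 1)) y := by
    intro y
    exact hda_congr (((((hasDerivAt_pow 3 y).const_mul 2).sub
      ((hasDerivAt_pow 2 y).const_mul 3)).add (hasDerivAt_id y)).const_mul
      (3 * η₁ * (Real.sqrt 3 * η₁) * (9*η₁^2/2))) (by push_cast; ring)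
  have hG0 : ∀ y : ℝ, HasDerivAt (fun y => (9*η₁^2/2)^2 * ((y^2 - y)^2))
      ((9*η₁^2/2)^2 * (4*y^3 - 6*y^2 + 2*y)) y := by
    intro y
    exact hda_congr ((((hasDerivAt_pow 2 y).sub (hasDerivAt_id y)).pow 2).const_mul
      ((9*η₁^2/2)^2)) (by push_cast [id_eq, Pi.sub_apply]; ring)
  have hG1 : ∀ y : ℝ, HasDerivAt
      (fun y => Real.sqrt 3 * η₁ * (9*η₁^2/2)^2 * (4*y^5 - 10*y^4 + 8*y^3 - 2*y^2))
      (Real.sqrt 3 * η₁ * (9*η₁^2/2)^2 * (20*y^4 - 40*y^3 + 24*y^2 - 4*y)) y := by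
    intro y
    exact hda_congr ((((((hasDerivAt_pow 5 y).const_mul 4).sub
      ((hasDerivAt_pow 4 y).const_mul 10)).add ((hasDerivAt_pow 3 y).const_mul 8)).sub
      ((hasDerivAt_pow 2 y).const_mul 2)).const_mul
      (Real.sqrt 3 * η₁ * (9*η₁^2/2)^2)) (by push_cast; ring)
  -- x-derivative chain
  have h1 := derivX η₁ γ hγ q
    (fun y => 9*η₁^2/2 * (y^2 - y)) (fun y => 9*η₁^2/2 * (2*y - 1))
    (fun y => Real.sqrt 3 * η₁ * (9*η₁^2/2) * (2*y^3 - 3*y^2 + y))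
    hP0 hq0 (fun y => by ring)
  have h2 := derivX η₁ γ hγ (dX q)
    (fun y => Real.sqrt 3 * η₁ * (9*η₁^2/2) * (2*y^3 - 3*y^2 + y))
    (fun y => Real.sqrt 3 * η₁ * (9*η₁^2/2) * (6*y^2 - 6*y + 1))
    (fun y => (Real.sqrt 3 * η₁)^2 * (9*η₁^2/2) * (6*y^4 - 12*y^3 + 7*y^2 - y))
    hP1 h1 (fun y => by ring)
  have h3 := derivX η₁ γ hγ (dX (dX q))
    (fun y => (Real.sqrt 3 * η₁)^2 * (9*η₁^2/2) * (6*y^4 - 12*y^3 + 7*y^2 - y))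
    (fun y => (Real.sqrt 3 * η₁)^2 * (9*η₁^2/2) * (24*y^3 - 36*y^2 + 14*y - 1))
    (fun y => (Real.sqrt 3 * η₁)^3 * (9*η₁^2/2) * (24*y^5 - 60*y^4 + 50*y^3 - 15*y^2 + y))
    hP2 h2 (fun y => by ring)
  have h4 := derivX η₁ γ hγ (dX (dX (dX q)))
    (fun y => (Real.sqrt 3 * η₁)^3 * (9*η₁^2/2) * (24*y^5 - 60*y^4 + 50*y^3 - 15*y^2 + y))
    (fun y => (Real.sqrt 3 * η₁)^3 * (9*η₁^2/2) * (120*y^4 - 240*y^3 + 150*y^2 - 30*y + 1))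
    (fun y => (Real.sqrt 3 * η₁)^4 * (9*η₁^2/2) *
      (120*y^6 - 360*y^5 + 390*y^4 - 180*y^3 + 31*y^2 - y))
    hP3 h3 (fun y => by ring)
  -- t-derivative chain
  have t1 := derivT η₁ γ hγ q
    (fun y => 9*η₁^2/2 * (y^2 - y)) (fun y => 9*η₁^2/2 * (2*y - 1))
    (fun y => 3 * η₁ * (Real.sqrt 3 * η₁) * (9*η₁^2/2) * (2*y^3 - 3*y^2 + y))
    hP0 hq0 (fun y => by ring)
  have t2 := derivT η₁ γ hγ (dT q)
    (fun y => 3 * η₁ * (Real.sqrt 3 * η₁) * (9*η₁^2/2) * (2*y^3 - 3*y^2 + y))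
    (fun y => 3 * η₁ * (Real.sqrt 3 * η₁) * (9*η₁^2/2) * (6*y^2 - 6*y + 1))
    (fun y => (3 * η₁ * (Real.sqrt 3 * η₁))^2 * (9*η₁^2/2) * (6*y^4 - 12*y^3 + 7*y^2 - y))
    hR1 t1 (fun y => by ring)
  -- square chain
  have hsq0 : ∀ x t, (fun x' t' => (q x' t') ^ 2) x t
      = (9*η₁^2/2)^2 * (((vv η₁ γ x t)^2 - vv η₁ γ x t)^2) := by
    intro x t
    simp only
    rw [hq0]
    ring
  have g1 := derivX η₁ γ hγ (fun x' t' => (q x' t') ^ 2)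
    (fun y => (9*η₁^2/2)^2 * ((y^2 - y)^2)) (fun y => (9*η₁^2/2)^2 * (4*y^3 - 6*y^2 + 2*y))
    (fun y => Real.sqrt 3 * η₁ * (9*η₁^2/2)^2 * (4*y^5 - 10*y^4 + 8*y^3 - 2*y^2))
    hG0 hsq0 (fun y => by ring)
  have g2 := derivX η₁ γ hγ (dX (fun x' t' => (q x' t') ^ 2))
    (fun y => Real.sqrt 3 * η₁ * (9*η₁^2/2)^2 * (4*y^5 - 10*y^4 + 8*y^3 - 2*y^2))
    (fun y => Real.sqrt 3 * η₁ * (9*η₁^2/2)^2 * (20*y^4 - 40*y^3 + 24*y^2 - 4*y))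
    (fun y => (Real.sqrt 3 * η₁)^2 * (9*η₁^2/2)^2 *
      (20*y^6 - 60*y^5 + 64*y^4 - 28*y^3 + 4*y^2))
    hG1 g1 (fun y => by ring)
  -- assemble
  intro x t
  rw [t2 x t, g2 x t, h4 x t]
  set w := vv η₁ γ x t with hw
  have hs : Real.sqrt 3 ^ 2 = 3 := Real.sq_sqrt (by norm_num)
  linear_combination
    (9*η₁^4*(9*η₁^2/2)*(6*w^4 - 12*w^3 + 7*w^2 - w)
      + 12*η₁^2*(9*η₁^2/2)^2*(20*w^6 - 60*w^5 + 64*w^4 - 28*w^3 + 4*w^2)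
      + (Real.sqrt 3 ^ 2 + 3) *
        (-3*η₁^4*(9*η₁^2/2)*(120*w^6 - 360*w^5 + 390*w^4 - 180*w^3 + 31*w^2 - w))) * hs
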